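/- Let q ≥ 2 be a prime power, m ≥ 2, and λ a proper divisor of q - 1 (λ | q - 1 and λ ≠ q - 1). Then n - q^(m-1) is a q-cyclotomic coset leader modulo n, where n = (q^m - 1)/λ. -/

import Mathlib

/-- The q-cyclotomic coset of `a` modulo `N`. -/
def qCoset (q N a : ℕ) : Set ℕ := {b | ∃ j : ℕ, b = a * q ^ j % N}

/-- The coset leader: the smallest element of the q-cyclotomic coset of `a` modulo `N`. -/
noncomputable def cosetLeader (q N a : ℕ) : ℕ := sInf (qCoset q N a)

/-- `a` is a coset leader modulo `N` if it is the minimum of its own coset. -/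
def IsCosetLeader (q N a : ℕ) : Prop := a = cosetLeader q N a

theorem stmt_11 (q m lam : ℕ) (hq : IsPrimePow q) (hq2 : 2 ≤ q) (hm : 2 ≤ m)
    (hl : lam ∣ q - 1) (hl' : lam ≠ q - 1) :
    IsCosetLeader q ((q ^ m - 1) / lam) ((q ^ m - 1) / lam - q ^ (m - 1)) := by
  set n := (q ^ m - 1) / lam with hn
  have hl0 : lam ≠ 0 := by rintro rfl; exact hl' (Nat.eq_zero_of_zero_dvd hl).symm
  have hlt : lam < q - 1 := lt_of_le_of_ne (Nat.le_of_dvd (by omega) hl) hl'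
  have hq3 : 3 ≤ q := by omega
  have hdl : lam ∣ q ^ m - 1 := hl.trans (by simpa using Nat.sub_dvd_pow_sub_pow q 1 m)
  have hnl : lam * n = q ^ m - 1 := Nat.mul_div_cancel' hdl
  have hqm : 1 ≤ q ^ m := Nat.one_le_pow _ _ (by omega)
  have hqm1pos : 0 < q ^ (m - 1) := Nat.pow_pos (by omega)
  -- q^(m-1) < n
  have hqm1n : q ^ (m - 1) < n := by
    have h1 : lam * q ^ (m - 1) ≤ (q - 2) * q ^ (m - 1) :=
      Nat.mul_le_mul_right _ (by omega)
    have h2 : (q - 2) * q ^ (m - 1) + 2 * q ^ (m - 1) = q ^ m := by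
      have : q ^ m = q * q ^ (m - 1) := by
        rw [← pow_succ']; congr 1; omega
      rw [this, ← Nat.add_mul]
      congr 1; omega
    have h3 : lam * q ^ (m - 1) < lam * n := by omega
    exact Nat.lt_of_mul_lt_mul_left h3
  have hn0 : 0 < n := lt_trans hqm1pos hqm1n
  have hqmone : (1 : ℕ) ≡ q ^ m [MOD n] :=
    (Nat.modEq_iff_dvd' hqm).mpr ⟨lam, by rw [mul_comm]; exact hnl.symm⟩
  -- key computation
  have hmod : ∀ j : ℕ, (n - q ^ (m - 1)) * q ^ j % n = n - q ^ ((m - 1 + j) % m) := by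
    intro j
    set r := (m - 1 + j) % m with hr
    have hrm : r < m := Nat.mod_lt _ (by omega)
    have hqr : q ^ r ≤ q ^ (m - 1) := Nat.pow_le_pow_right (by omega) (by omega)
    have hpow : q ^ (m - 1 + j) ≡ q ^ r [MOD n] := by
      conv_lhs => rw [show m - 1 + j = m * ((m - 1 + j) / m) + r from
        (Nat.div_add_mod _ _).symm]
      rw [pow_add, pow_mul]
      calc (q ^ m) ^ ((m - 1 + j) / m) * q ^ r
          ≡ 1 ^ ((m - 1 + j) / m) * q ^ r [MOD n] :=
            Nat.ModEq.mul_right _ (Nat.ModEq.pow _ hqmone.symm)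
        _ = q ^ r := by rw [one_pow, one_mul]
    have hsum : (n - q ^ (m - 1)) * q ^ j + q ^ (m - 1 + j) = n * q ^ j := by
      rw [Nat.sub_mul, pow_add]
      have h := Nat.mul_le_mul_right (q ^ j) hqm1n.le
      omega
    have hmeq : (n - q ^ (m - 1)) * q ^ j ≡ n - q ^ r [MOD n] := by
      have h1 : (n - q ^ (m - 1)) * q ^ j + q ^ (m - 1 + j)
          ≡ (n - q ^ r) + q ^ r [MOD n] := by
        rw [hsum, Nat.sub_add_cancel (le_of_lt (lt_of_le_of_lt hqr hqm1n))]
        calc n * q ^ j ≡ 0 * q ^ j [MOD n] :=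
              Nat.ModEq.mul_right _ (Nat.modEq_zero_iff_dvd.mpr dvd_rfl)
          _ = 0 := by ring
          _ ≡ n [MOD n] := (Nat.modEq_zero_iff_dvd.mpr dvd_rfl).symm
      exact Nat.ModEq.add_right_cancel hpow h1
    calc (n - q ^ (m - 1)) * q ^ j % n = (n - q ^ r) % n := hmeq
      _ = n - q ^ r := Nat.mod_eq_of_lt (Nat.sub_lt hn0 (Nat.pow_pos (by omega)))
  -- conclude
  unfold IsCosetLeader cosetLeader qCoset
  have hm1 : (m - 1 + 0) % m = m - 1 := by
    rw [Nat.add_zero]; exact Nat.mod_eq_of_lt (by omega)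
  apply le_antisymm
  · have hne : (({b | ∃ j : ℕ, b = (n - q ^ (m - 1)) * q ^ j % n}) : Set ℕ).Nonempty :=
      ⟨(n - q ^ (m - 1)) * q ^ 0 % n, 0, rfl⟩
    obtain ⟨j, hj⟩ := Nat.sInf_mem hne
    rw [hj, hmod j]
    exact Nat.sub_le_sub_left
      (Nat.pow_le_pow_right (by omega) (by
        have := Nat.mod_lt (m - 1 + j) (show 0 < m by omega); omega)) n
  · exact Nat.sInf_le ⟨0, by rw [hmod 0, hm1]⟩
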